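/- HyperPDL-Δ subsumes the until operator: for the translation tr(φ₁ U φ₂) := ⟨(tr(φ₁)? · •)^*⟩ tr(φ₂) (where • is the all-wildcard tuple), a path assignment Π satisfies ⟨(ψ₁? · •)^*⟩ ψ₂ if and only if there exists i ≥ 0 such that Π[2i, ∞] ⊨ ψ₂ and for all 0 ≤ j < i, Π[2j, ∞] ⊨ ψ₁. -/
import Mathlib


/-- A trace: an infinite alternating sequence of labels (sets of atomic propositions)
and atomic programs; `lab j` is the label at step `j`, `act j` the atomic program
between steps `j` and `j+1`. -/
structure Trace (AP P : Type) where
  lab : ℕ → Set AP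
  act : ℕ → P

/-- The suffix of a trace starting after `j` steps. -/
def Trace.drop {AP P : Type} (t : Trace AP P) (j : ℕ) : Trace AP P :=
  ⟨fun m => t.lab (j + m), fun m => t.act (j + m)⟩

/-- The shifted trace assignment. -/
def TAdrop {AP P : Type} {n : ℕ} (Pa : Fin n → Trace AP P) (j : ℕ) : Fin n → Trace AP P :=
  fun l => (Pa l).drop j

mutual
/-- Quantifier-free HyperPDL-Δ formulas over `n` path variables. -/
inductive QF (AP P : Type) (n : ℕ) : Type
  | atom (a : AP) (l : Fin n) : QF AP P n
  | not (φ : QF AP P n) : QF AP P n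
  | and (φ ψ : QF AP P n) : QF AP P n
  | or (φ ψ : QF AP P n) : QF AP P n
  | dia (α : Pg AP P n) (φ : QF AP P n) : QF AP P n
  | box (α : Pg AP P n) (φ : QF AP P n) : QF AP P n
  | delta (α : Pg AP P n) : QF AP P n

/-- Programs of HyperPDL-Δ (with `none` as the wildcard coordinate). -/
inductive Pg (AP P : Type) (n : ℕ) : Type
  | atom (t : Fin n → Option P) : Pg AP P n
  | eps : Pg AP P n
  | sum (a b : Pg AP P n) : Pg AP P n
  | seq (a b : Pg AP P n) : Pg AP P n
  | star (a : Pg AP P n) : Pg AP P n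
  | test (φ : QF AP P n) : Pg AP P n
end

mutual
/-- Satisfaction of a quantifier-free formula by a trace assignment. -/
def QF.Sat {AP P : Type} {n : ℕ} : QF AP P n → (Fin n → Trace AP P) → Prop
  | .atom a l, Pa => a ∈ (Pa l).lab 0
  | .not φ, Pa => ¬ φ.Sat Pa
  | .and φ ψ, Pa => φ.Sat Pa ∧ ψ.Sat Pa
  | .or φ ψ, Pa => φ.Sat Pa ∨ ψ.Sat Pa
  | .dia α φ, Pa => ∃ j, α.Rel Pa 0 j ∧ φ.Sat (TAdrop Pa j)
  | .box α φ, Pa => ∀ j, α.Rel Pa 0 j → φ.Sat (TAdrop Pa j)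
  | .delta α, Pa => ∃ k : ℕ → ℕ, k 0 = 0 ∧ (∀ i, k i ≤ k (i + 1)) ∧
      ∀ i, α.Rel Pa (k i) (k (i + 1))

/-- The relation `(Π, i, k) ∈ R(α)` (indices count steps). -/
def Pg.Rel {AP P : Type} {n : ℕ} : Pg AP P n → (Fin n → Trace AP P) → ℕ → ℕ → Prop
  | .atom t, Pa, i, k => k = i + 1 ∧ ∀ l, t l = none ∨ t l = some ((Pa l).act i)
  | .eps, _, i, k => i = k
  | .sum a b, Pa, i, k => a.Rel Pa i k ∨ b.Rel Pa i k
  | .seq a b, Pa, i, k => ∃ j, i ≤ j ∧ j ≤ k ∧ a.Rel Pa i j ∧ b.Rel Pa j k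
  | .star a, Pa, i, k => ∃ (m : ℕ) (js : Fin (m + 1) → ℕ), js 0 = i ∧ js (Fin.last m) = k ∧
      ∀ l : Fin m, js l.castSucc ≤ js l.succ ∧ a.Rel Pa (js l.castSucc) (js l.succ)
  | .test φ, Pa, i, k => i = k ∧ φ.Sat (TAdrop Pa i)
end

/-- The all-wildcard tuple program `•`. -/
def bullet {AP P : Type} {n : ℕ} : Pg AP P n := .atom fun _ => none

/-- **HyperPDL-Δ expresses Until**: `⟨(ψ₁? · •)^*⟩ ψ₂` holds at `Π` iff there is an
`i ≥ 0` such that `ψ₂` holds at the suffix after `i` steps (paper position `2i`) and `ψ₁`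
holds at all earlier suffixes. -/
theorem dia_star_test_bullet_iff_until {AP P : Type} {n : ℕ}
    (ψ1 ψ2 : QF AP P n) (Pa : Fin n → Trace AP P) :
    (QF.dia (.star (.seq (.test ψ1) bullet)) ψ2).Sat Pa ↔
      ∃ i, ψ2.Sat (TAdrop Pa i) ∧ ∀ j < i, ψ1.Sat (TAdrop Pa j) := by
  constructor
  · rintro ⟨j, ⟨m, js, h0, hlast, hstep⟩, hψ2⟩
    have hid : ∀ l : Fin (m + 1), js l = l.val := by
      intro l
      induction l using Fin.induction with
      | zero => simpa using h0
      | succ l ih =>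
        obtain ⟨-, j', -, -, ⟨heq, -⟩, hk, -⟩ := hstep l
        simp only [Pg.Rel, Fin.coe_castSucc, Fin.val_succ] at *
        omega
    have hkm : j = m := by
      have := hid (Fin.last m); rw [hlast] at this; simpa using this
    refine ⟨m, by rwa [hkm] at hψ2, ?_⟩
    intro i hi
    obtain ⟨-, j', -, -, ⟨heq, hsat⟩, -⟩ := hstep ⟨i, hi⟩
    have h1 := hid (Fin.castSucc ⟨i, hi⟩)
    simp only [Fin.coe_castSucc] at h1
    rwa [h1] at hsat
  · rintro ⟨i, hψ2, hψ1⟩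
    refine ⟨i, ⟨i, fun l => l.val, rfl, rfl, ?_⟩, hψ2⟩
    intro l
    refine ⟨by simp, l.val, le_refl _, by simp, ⟨rfl, hψ1 _ l.isLt⟩, ?_⟩
    exact ⟨by simp, fun _ => Or.inl rfl⟩
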